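/- Let P : ℝⁿ → ℝⁿ be given by the elementary symmetric polynomials, P(x) = (e₁(x), …, eₙ(x)). Then the Jacobian determinant of P equals, up to a nonzero constant, the product ∏_{i<j} (xᵢ − xⱼ). -/

import Mathlib

open MvPolynomial Finset Matrix

section aux

variable {n : ℕ}

lemma pderiv_prod_X (j : Fin n) (s : Finset (Fin n)) :
    pderiv j (∏ a ∈ s, X a : MvPolynomial (Fin n) ℝ) =
      if j ∈ s then ∏ a ∈ s.erase j, X a else 0 := by
  classical
  induction s using Finset.induction_on with
  | empty => simp
  | @insert a s ha ih =>
      rw [Finset.prod_insert ha, pderiv_mul, ih]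
      by_cases hj : j = a
      · subst hj
        simp [ha, Finset.erase_insert ha]
      · rw [pderiv_X_of_ne (Ne.symm hj), zero_mul, zero_add]
        by_cases hjs : j ∈ s
        · have hane : a ∉ s.erase j := fun h => ha (Finset.mem_of_mem_erase h)
          rw [if_pos hjs, if_pos (Finset.mem_insert_of_mem hjs),
            Finset.erase_insert_of_ne (fun h => hj h.symm), Finset.prod_insert hane]
        · rw [if_neg hjs, if_neg (by simp [hj, hjs]), mul_zero]

lemma pderiv_esymm (j : Fin n) (k : ℕ) :
    pderiv j (esymm (Fin n) ℝ (k + 1)) =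
      ∑ t ∈ (univ.erase j).powersetCard k, ∏ a ∈ t, X a := by
  classical
  rw [esymm, map_sum]
  have huniv : (univ : Finset (Fin n)) = insert j (univ.erase j) := by
    rw [Finset.insert_erase (Finset.mem_univ j)]
  conv_lhs => rw [huniv, Finset.powersetCard_succ_insert (Finset.notMem_erase j univ)]
  rw [Finset.sum_union]
  · have h1 : ∑ t ∈ (univ.erase j).powersetCard (k+1),
        pderiv j (∏ a ∈ t, X a : MvPolynomial (Fin n) ℝ) = 0 := by
      apply Finset.sum_eq_zero
      intro t ht
      rw [pderiv_prod_X, if_neg]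
      intro hjt
      exact Finset.notMem_erase j univ ((Finset.mem_powersetCard.mp ht).1 hjt)
    rw [h1, zero_add]
    rw [Finset.sum_image]
    · apply Finset.sum_congr rfl
      intro t ht
      have hjt : j ∉ t := fun h =>
        Finset.notMem_erase j univ ((Finset.mem_powersetCard.mp ht).1 h)
      rw [pderiv_prod_X, if_pos (Finset.mem_insert_self j t), Finset.erase_insert hjt]
    · intro t₁ h₁ t₂ h₂ he
      have hj₁ : j ∉ t₁ := fun h =>
        Finset.notMem_erase j univ ((Finset.mem_powersetCard.mp h₁).1 h)
      have hj₂ : j ∉ t₂ := fun h =>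
        Finset.notMem_erase j univ ((Finset.mem_powersetCard.mp h₂).1 h)
      rw [← Finset.erase_insert hj₁, ← Finset.erase_insert hj₂, he]
  · rw [Finset.disjoint_left]
    intro t ht hti
    rcases Finset.mem_image.mp hti with ⟨u, hu, rfl⟩
    exact Finset.notMem_erase j univ
      ((Finset.mem_powersetCard.mp ht).1 (Finset.mem_insert_self j u))

end aux

lemma key_sum (j l : Fin n) :
    ∑ i : Fin n, pderiv j (esymm (Fin n) ℝ ((i : ℕ) + 1)) * (- X l) ^ (n - 1 - (i : ℕ)) =
      ∏ k ∈ univ.erase j, (X k - X l) := by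
  classical
  have hcard : (univ.erase j).card = n - 1 := by
    rw [Finset.card_erase_of_mem (Finset.mem_univ j), Finset.card_univ, Fintype.card_fin]
  have hn : 1 ≤ n := Nat.one_le_iff_ne_zero.mpr (by rintro rfl; exact j.elim0)
  have hprod : ∏ k ∈ univ.erase j, (X k - X l)
      = ∑ t ∈ (univ.erase j).powerset,
          (∏ a ∈ t, X a) * (- X l : MvPolynomial (Fin n) ℝ) ^ (n - 1 - t.card) := by
    have := Finset.prod_add (fun k : Fin n => (X k : MvPolynomial (Fin n) ℝ))
      (fun _ => - X l) (univ.erase j)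
    simp only [sub_eq_add_neg] at *
    rw [this]
    apply Finset.sum_congr rfl
    intro t ht
    rw [Finset.prod_const, Finset.card_sdiff_of_subset (Finset.mem_powerset.mp ht), hcard]
  rw [hprod, Finset.powerset_card_biUnion, Finset.sum_biUnion, hcard]
  · rw [Fin.sum_univ_eq_sum_range (fun i => pderiv j (esymm (Fin n) ℝ (i + 1)) *
      (- X l : MvPolynomial (Fin n) ℝ) ^ (n - 1 - i)), Nat.sub_add_cancel hn]
    apply Finset.sum_congr rfl
    intro i _
    rw [pderiv_esymm, Finset.sum_mul]
    apply Finset.sum_congr rfl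
    intro t ht
    rw [(Finset.mem_powersetCard.mp ht).2]
  · intro a _ b _ hab
    simp only [Function.onFun]
    exact Finset.disjoint_left.mpr fun t hta htb => hab
      (((Finset.mem_powersetCard.mp hta).2.symm).trans (Finset.mem_powersetCard.mp htb).2)

lemma hasFDerivAt_mvpoly_eval (p : MvPolynomial (Fin n) ℝ) (x : Fin n → ℝ) :
    HasFDerivAt (fun y : Fin n → ℝ => eval y p)
      (∑ j : Fin n, eval x (pderiv j p) • (ContinuousLinearMap.proj j : (Fin n → ℝ) →L[ℝ] ℝ))
      x := by
  classical
  induction p using MvPolynomial.induction_on with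
  | C a =>
      simp only [eval_C, pderiv_C, map_zero, zero_smul, Finset.sum_const_zero]
      exact hasFDerivAt_const _ _
  | add p q hp hq =>
      have h : HasFDerivAt (fun y : Fin n → ℝ => eval y p + eval y q) _ x := hp.add hq
      have heq : (fun y : Fin n → ℝ => eval y p + eval y q)
          = fun y : Fin n → ℝ => eval y (p + q) := by funext y; simp
      rw [heq] at h
      convert h using 1
      · rfl
      · rfl
      rw [← Finset.sum_add_distrib]
      apply Finset.sum_congr rfl
      intro k _
      rw [map_add, map_add, add_smul]
  | mul_X p i hp =>
      have hXi : HasFDerivAt (fun y : Fin n → ℝ => y i)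
          (ContinuousLinearMap.proj i : (Fin n → ℝ) →L[ℝ] ℝ) x :=
        (ContinuousLinearMap.proj i : (Fin n → ℝ) →L[ℝ] ℝ).hasFDerivAt
      have h : HasFDerivAt (fun y : Fin n → ℝ => eval y p * y i) _ x := hp.mul hXi
      have heq : (fun y : Fin n → ℝ => eval y p * y i) = fun y => eval y (p * X i) := by
        funext y; simp
      rw [heq] at h
      convert h using 1
      · rfl
      · rfl
      ext v
      simp only [ContinuousLinearMap.add_apply, ContinuousLinearMap.smul_apply,
        ContinuousLinearMap.sum_apply, ContinuousLinearMap.proj_apply]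
      simp only [pderiv_mul, pderiv_X, _root_.map_add, _root_.map_mul, eval_X, smul_eq_mul,
        add_mul, Finset.sum_add_distrib, Finset.mul_sum, Pi.single_apply, apply_ite (eval x),
        _root_.map_one, _root_.map_zero, ite_mul, one_mul, zero_mul, Finset.sum_ite_eq,
        Finset.mem_univ, if_true, mul_ite, mul_zero, mul_one]
      rw [add_comm]
      congr 1
      exact Finset.sum_congr rfl fun k _ => by ring

lemma fderiv_eval_single (p : MvPolynomial (Fin n) ℝ) (x : Fin n → ℝ) (j : Fin n) :
    fderiv ℝ (fun y : Fin n → ℝ => eval y p) x (Pi.single j 1) = eval x (pderiv j p) := by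
  classical
  rw [(hasFDerivAt_mvpoly_eval p x).fderiv]
  simp only [ContinuousLinearMap.sum_apply, ContinuousLinearMap.smul_apply,
    ContinuousLinearMap.proj_apply, Pi.single_apply, smul_eq_mul, mul_ite, mul_one, mul_zero,
    Finset.sum_ite_eq', Finset.mem_univ, if_true]

private noncomputable def Jp (n : ℕ) : Matrix (Fin n) (Fin n) (MvPolynomial (Fin n) ℝ) :=
  Matrix.of fun i j => pderiv j (esymm (Fin n) ℝ ((i : ℕ) + 1))

private noncomputable def Wm (n : ℕ) : Matrix (Fin n) (Fin n) (MvPolynomial (Fin n) ℝ) :=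
  Matrix.of fun i l => (- X l) ^ (n - 1 - (i : ℕ))

private noncomputable def Vp (n : ℕ) : MvPolynomial (Fin n) ℝ :=
  ∏ i : Fin n, ∏ j ∈ Ioi i, (X i - X j)

private noncomputable def Vp' (n : ℕ) : MvPolynomial (Fin n) ℝ :=
  ∏ i : Fin n, ∏ j ∈ Ioi i, (X j - X i)

lemma JpT_mul_W (n : ℕ) : (Jp n)ᵀ * Wm n =
    Matrix.diagonal (fun j => ∏ k ∈ univ.erase j, (X k - X j : MvPolynomial (Fin n) ℝ)) := by
  classical
  refine Matrix.ext fun j l => ?_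
  rw [Matrix.mul_apply]
  simp only [Jp, Wm, Matrix.transpose_apply, Matrix.of_apply]
  rw [key_sum j l, Matrix.diagonal_apply]
  by_cases h : j = l
  · subst h; simp
  · rw [if_neg h]
    apply Finset.prod_eq_zero (i := l)
    · exact Finset.mem_erase.mpr ⟨fun hlj => h hlj.symm, Finset.mem_univ l⟩
    · rw [sub_self]

lemma prod_neg_finset {α R : Type*} [CommRing R] (s : Finset α) (f : α → R) :
    ∏ j ∈ s, (- f j) = (-1) ^ s.card * ∏ j ∈ s, f j := by
  rw [Finset.prod_congr rfl fun j _ => (neg_one_mul (f j)).symm, Finset.prod_mul_distrib,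
    Finset.prod_const]

lemma Vp'_eq (n : ℕ) : ∃ e : ℝ, e ≠ 0 ∧ Vp' n = C e * Vp n := by
  classical
  refine ⟨(-1) ^ (∑ i : Fin n, (Ioi i).card), pow_ne_zero _ (by norm_num), ?_⟩
  unfold Vp Vp'
  have h : ∀ i : Fin n, ∏ j ∈ Ioi i, (X j - X i : MvPolynomial (Fin n) ℝ)
      = (-1) ^ (Ioi i).card * ∏ j ∈ Ioi i, (X i - X j) := by
    intro i
    rw [← prod_neg_finset]
    apply Finset.prod_congr rfl
    intro j _
    ring
  rw [Finset.prod_congr rfl fun i _ => h i, Finset.prod_mul_distrib,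
    Finset.prod_pow_eq_pow_sum, map_pow, map_neg, C_1]

lemma detW (n : ℕ) : ∃ a : ℝ, a ≠ 0 ∧ (Wm n).det = C a * Vp' n := by
  classical
  set v : Fin n → MvPolynomial (Fin n) ℝ := fun l => X l with hv
  set A : Matrix (Fin n) (Fin n) (MvPolynomial (Fin n) ℝ) :=
    Matrix.of (fun i l => v l ^ (n - 1 - (i : ℕ))) with hA
  have hW : Wm n = Matrix.of fun (i l : Fin n) =>
      ((-1 : MvPolynomial (Fin n) ℝ) ^ (n - 1 - (i : ℕ))) * A i l := by
    refine Matrix.ext fun i l => ?_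
    simp only [Wm, Matrix.of_apply, hA, hv]
    rw [neg_pow]
  have hsub : A.submatrix (Fin.revPerm : Equiv.Perm (Fin n)) id = (Matrix.vandermonde v)ᵀ := by
    refine Matrix.ext fun i l => ?_
    simp only [Matrix.submatrix_apply, Matrix.of_apply, Matrix.transpose_apply,
      Matrix.vandermonde_apply, id_eq, hA]
    congr 1
    have h1 := i.isLt
    have h2 : ((Fin.revPerm i : Fin n) : ℕ) = n - (i + 1) := Fin.val_rev _
    omega
  have hperm := Matrix.det_permute (Fin.revPerm : Equiv.Perm (Fin n)) A
  rw [hsub, Matrix.det_transpose, Matrix.det_vandermonde] at hperm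
  have hVp' : Vp' n = ∏ i : Fin n, ∏ j ∈ Ioi i, (v j - v i) := rfl
  set c1 : ℝ := ∏ i : Fin n, (-1 : ℝ) ^ (n - 1 - (i : ℕ)) with hc1
  have hc1ne : c1 ≠ 0 :=
    Finset.prod_ne_zero_iff.mpr fun i _ => pow_ne_zero _ (by norm_num)
  have hCc1 : (C c1 : MvPolynomial (Fin n) ℝ)
      = ∏ i : Fin n, (-1 : MvPolynomial (Fin n) ℝ) ^ (n - 1 - (i : ℕ)) := by
    rw [hc1, map_prod]
    exact Finset.prod_congr rfl fun i _ => by rw [map_pow, map_neg, C_1]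
  have hdetW : (Wm n).det = C c1 * A.det := by
    rw [hW, Matrix.det_mul_column, hCc1]
  rcases Int.units_eq_one_or (Equiv.Perm.sign (Fin.revPerm : Equiv.Perm (Fin n))) with hs | hs <;>
    rw [hs] at hperm <;> simp only [Units.val_one, Units.val_neg, Int.cast_one, Int.cast_neg,
      one_mul, neg_mul, Int.reduceNeg] at hperm
  · refine ⟨c1, hc1ne, ?_⟩
    rw [hdetW, hVp', hperm]
  · refine ⟨-c1, neg_ne_zero.mpr hc1ne, ?_⟩
    have h2 : A.det = -∏ i : Fin n, ∏ j ∈ Ioi i, (v j - v i) := by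
      linear_combination hperm
    rw [hdetW, hVp', h2, map_neg]
    ring

lemma diag_prod (n : ℕ) :
    ∏ j : Fin n, ∏ k ∈ univ.erase j, (X k - X j : MvPolynomial (Fin n) ℝ)
      = Vp n * Vp' n := by
  classical
  have herase : ∀ j : Fin n, univ.erase j = Iio j ∪ Ioi j := by
    intro j
    ext k
    simp only [Finset.mem_erase, Finset.mem_univ, and_true, Finset.mem_union, Finset.mem_Iio,
      Finset.mem_Ioi]
    exact ne_iff_lt_or_gt
  have hdisj : ∀ j : Fin n, Disjoint (Iio j) (Ioi j) := by
    intro j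
    rw [Finset.disjoint_left]
    intro k hk hk'
    exact absurd ((Finset.mem_Iio.mp hk).trans (Finset.mem_Ioi.mp hk')) (lt_irrefl k)
  calc ∏ j : Fin n, ∏ k ∈ univ.erase j, (X k - X j : MvPolynomial (Fin n) ℝ)
      = ∏ j : Fin n, ((∏ k ∈ Iio j, (X k - X j)) * ∏ k ∈ Ioi j, (X k - X j)) := by
        refine Finset.prod_congr rfl fun j _ => ?_
        rw [herase j, Finset.prod_union (hdisj j)]
    _ = (∏ j : Fin n, ∏ k ∈ Iio j, (X k - X j)) * ∏ j : Fin n, ∏ k ∈ Ioi j, (X k - X j) :=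
        Finset.prod_mul_distrib
    _ = Vp n * Vp' n := by
        congr 1
        · rw [Finset.prod_comm' (t' := (univ : Finset (Fin n))) (s' := fun k => Ioi k)
            (f := fun j k => (X k - X j : MvPolynomial (Fin n) ℝ))
            (fun j k => by
              simp only [Finset.mem_univ, true_and, and_true, Finset.mem_Iio, Finset.mem_Ioi])]
          rfl

lemma Vp_ne_zero (n : ℕ) : Vp n ≠ 0 := by
  classical
  unfold Vp
  rw [Finset.prod_ne_zero_iff]
  intro i _
  rw [Finset.prod_ne_zero_iff]
  intro j hj
  intro h
  have hij : i ≠ j := ne_of_lt (Finset.mem_Ioi.mp hj)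
  have := congrArg (eval (Pi.single i (1 : ℝ))) h
  simp only [map_sub, eval_X, map_zero, Pi.single_apply, if_pos rfl] at this
  rw [if_neg (fun hji : j = i => hij hji.symm)] at this
  norm_num at this

lemma detJp (n : ℕ) : ∃ c : ℝ, c ≠ 0 ∧ (Jp n).det = C c * Vp n := by
  obtain ⟨a, ha, hWdet⟩ := detW n
  obtain ⟨e, he, hV'⟩ := Vp'_eq n
  have hmain : (Jp n).det * (Wm n).det = Vp n * Vp' n := by
    rw [← Matrix.det_transpose (Jp n), ← Matrix.det_mul, JpT_mul_W, Matrix.det_diagonal,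
      diag_prod]
  rw [hWdet, hV'] at hmain
  have h1 : (Jp n).det * C a * C e * Vp n = C e * Vp n * Vp n := by linear_combination hmain
  have h2 : (Jp n).det * C a * C e = C e * Vp n := mul_right_cancel₀ (Vp_ne_zero n) h1
  have hb : a * e ≠ 0 := mul_ne_zero ha he
  refine ⟨e * (a * e)⁻¹, mul_ne_zero he (inv_ne_zero hb), ?_⟩
  calc (Jp n).det = (Jp n).det * C (a * e) * C ((a * e)⁻¹) := by
        rw [mul_assoc, ← C_mul, mul_inv_cancel₀ hb, C_1, mul_one]
    _ = C e * Vp n * C ((a * e)⁻¹) := by rw [C_mul, ← mul_assoc, h2]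
    _ = C (e * (a * e)⁻¹) * Vp n := by rw [C_mul]; ring

/-- The Jacobian matrix (via Fréchet derivatives) of the map given by the
elementary symmetric polynomials `e₁, …, eₙ`. -/
noncomputable def esymmJacobian (n : ℕ) (x : Fin n → ℝ) : Matrix (Fin n) (Fin n) ℝ :=
  Matrix.of fun i j =>
    fderiv ℝ (fun y : Fin n → ℝ =>
      MvPolynomial.eval y (MvPolynomial.esymm (Fin n) ℝ ((i : ℕ) + 1))) x (Pi.single j 1)

/-- The Jacobian determinant of the elementary symmetric polynomial map equals,
up to a nonzero constant, `∏_{i<j} (xᵢ - xⱼ)`. -/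
theorem stmt_7 (n : ℕ) :
    ∃ c : ℝ, c ≠ 0 ∧ ∀ x : Fin n → ℝ,
      (esymmJacobian n x).det
        = c * ∏ i : Fin n, ∏ j ∈ Finset.Ioi i, (x i - x j) := by
  obtain ⟨c, hc, hJp⟩ := detJp n
  refine ⟨c, hc, fun x => ?_⟩
  have hmap : esymmJacobian n x = (eval x : MvPolynomial (Fin n) ℝ →+* ℝ).mapMatrix (Jp n) := by
    refine Matrix.ext fun i j => ?_
    simp only [esymmJacobian, Matrix.of_apply, RingHom.mapMatrix_apply, Matrix.map_apply, Jp]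
    exact fderiv_eval_single _ x j
  rw [hmap, ← RingHom.map_det, hJp]
  simp only [_root_.map_mul, eval_C, map_prod, map_sub, eval_X, Vp]
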